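/- In the twisted Grassmann graph J̃_q(2D+1,D), for all vertices y, z ∈ X and every integer i with 0 ≤ i ≤ D, the graph distance between y and z equals i if and only if dim y + dim z − 2 dim(y ∩ z) = 2i. In particular, J̃_q(2D+1,D) is connected with diameter D. -/

import Mathlib

open Module Submodule

section Helpers

variable {F V : Type*} [Field F] [AddCommGroup V] [Module F V] [FiniteDimensional F V]

lemma tg_finrank_sup_span {p : Submodule F V} {x : V} (hx : x ∉ p) :
    finrank F ↥(p ⊔ F ∙ x) = finrank F p + 1 := by
  have hx0 : x ≠ 0 := fun h => hx (h ▸ p.zero_mem)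
  have hinf : p ⊓ (F ∙ x) = ⊥ := by
    rw [eq_bot_iff]
    rintro v ⟨hv, hvx⟩
    obtain ⟨c, rfl⟩ := mem_span_singleton.mp hvx
    rcases eq_or_ne c 0 with rfl | hc
    · simp
    · exact absurd (by simpa [smul_smul, inv_mul_cancel₀ hc] using p.smul_mem c⁻¹ hv) hx
  have := Submodule.finrank_sup_add_finrank_inf_eq p (F ∙ x)
  rw [hinf, finrank_bot, finrank_span_singleton hx0] at this
  omega

lemma tg_exists_between {U W : Submodule F V} (hUW : U ≤ W) (k : ℕ) (h1 : finrank F U ≤ k)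
    (h2 : k ≤ finrank F W) : ∃ Z, U ≤ Z ∧ Z ≤ W ∧ finrank F Z = k := by
  induction k, h1 using Nat.le_induction with
  | base => exact ⟨U, le_rfl, hUW, rfl⟩
  | succ k hk ih =>
    obtain ⟨Z, hUZ, hZW, hZ⟩ := ih (by omega)
    have hlt : Z < W := lt_of_le_of_ne hZW (by rintro rfl; omega)
    obtain ⟨x, hxW, hxZ⟩ := SetLike.exists_of_lt hlt
    refine ⟨Z ⊔ F ∙ x, hUZ.trans le_sup_left,
      sup_le hZW ((span_singleton_le_iff_mem x W).mpr hxW), ?_⟩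
    rw [tg_finrank_sup_span hxZ, hZ]

omit [FiniteDimensional F V] in
lemma tg_avoid_two {y z h : Submodule F V} (hz : ¬y ≤ z) (hh : ¬y ≤ h) :
    ∃ u, u ∈ y ∧ u ∉ z ∧ u ∉ h := by
  obtain ⟨a, ha, haz⟩ := SetLike.not_le_iff_exists.mp hz
  obtain ⟨b, hb, hbh⟩ := SetLike.not_le_iff_exists.mp hh
  by_cases hah : a ∈ h
  · by_cases hbz : b ∈ z
    · refine ⟨a + b, y.add_mem ha hb, fun h' => haz ?_, fun h' => hbh ?_⟩
      · simpa using z.sub_mem h' hbz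
      · simpa using h.sub_mem h' hah
    · exact ⟨b, hb, hbz, hbh⟩
  · exact ⟨a, ha, haz, hah⟩

lemma tg_triangle (y w z : Submodule F V) :
    finrank F ↥(y ⊓ w) + finrank F ↥(w ⊓ z) ≤ finrank F w + finrank F ↥(y ⊓ z) := by
  have h1 := Submodule.finrank_sup_add_finrank_inf_eq (y ⊓ w) (w ⊓ z)
  have h2 : finrank F ↥((y ⊓ w) ⊔ (w ⊓ z)) ≤ finrank F w :=
    Submodule.finrank_mono (sup_le inf_le_right inf_le_left)
  have h3 : finrank F ↥((y ⊓ w) ⊓ (w ⊓ z)) ≤ finrank F ↥(y ⊓ z) :=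
    Submodule.finrank_mono
      (le_inf (inf_le_left.trans inf_le_left) (inf_le_right.trans inf_le_right))
  omega

lemma tg_inf_le_left' (y z : Submodule F V) : finrank F ↥(y ⊓ z) ≤ finrank F y :=
  Submodule.finrank_mono inf_le_left

lemma tg_inf_le_right' (y z : Submodule F V) : finrank F ↥(y ⊓ z) ≤ finrank F z :=
  Submodule.finrank_mono inf_le_right

lemma tg_eq_of_inf (y z : Submodule F V)
    (h : finrank F y + finrank F z ≤ 2 * finrank F ↥(y ⊓ z)) : y = z := by
  have h1 := tg_inf_le_left' y z
  have h2 := tg_inf_le_right' y z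
  have e1 : y ⊓ z = y := Submodule.eq_of_le_of_finrank_le inf_le_left (by omega)
  have e2 : y ⊓ z = z := Submodule.eq_of_le_of_finrank_le inf_le_right (by omega)
  rw [← e1, e2]

lemma tg_inf_rank {w Z z' : Submodule F V} {u : V} (hz'w : z' ≤ w) (hz'Z : z' ≤ Z)
    (huw : u ∈ w) (huZ : u ∉ Z) (hwZ : finrank F w ≤ finrank F Z)
    (hz' : finrank F z' + 1 = finrank F Z) : finrank F ↥(w ⊓ Z) = finrank F z' := by
  have h1 : finrank F z' ≤ finrank F ↥(w ⊓ Z) := Submodule.finrank_mono (le_inf hz'w hz'Z)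
  have hne : w ⊓ Z ≠ Z := by
    intro h
    have hZw : Z ≤ w := by rw [← h]; exact inf_le_left
    have heq : Z = w := Submodule.eq_of_le_of_finrank_le hZw hwZ
    exact huZ (by rw [heq]; exact huw)
  have h2 : finrank F ↥(w ⊓ Z) < finrank F Z :=
    Submodule.finrank_lt_finrank_of_lt (lt_of_le_of_ne inf_le_right hne)
  omega

end Helpers

/-- The vertex set `X = X' ⊔ X''` of the twisted Grassmann graph: the
`(D+1)`-dimensional subspaces of `(F_q)^{2D+1}` not contained in the fixed
hyperplane `H`, together with the `(D-1)`-dimensional subspaces of `H`. -/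
def TGVertex (F : Type) [Field F] (D : ℕ) (H : Submodule F (Fin (2 * D + 1) → F)) : Type :=
  {y : Submodule F (Fin (2 * D + 1) → F) //
    (finrank F y = D + 1 ∧ ¬y ≤ H) ∨ (finrank F y = D - 1 ∧ y ≤ H)}

/-- The twisted Grassmann graph `J̃_q(2D+1, D)`: vertices `y, z` are adjacent
iff `dim y + dim z - 2 dim(y ∩ z) = 2`. -/
def twistedGrassmann (F : Type) [Field F] (D : ℕ)
    (H : Submodule F (Fin (2 * D + 1) → F)) : SimpleGraph (TGVertex F D H) where
  Adj y z := finrank F y.1 + finrank F z.1 = 2 * finrank F ↥(y.1 ⊓ z.1) + 2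
  symm := by
    constructor
    intro y z hyz
    try beta_reduce at hyz ⊢
    rw [inf_comm] at hyz
    omega
  loopless := by
    constructor
    intro y hy
    try beta_reduce at hy
    rw [inf_idem] at hy
    omega


section Main

variable {F : Type} [Field F] {D : ℕ} {H : Submodule F (Fin (2 * D + 1) → F)}

lemma tg_dim_cases (y : TGVertex F D H) :
    finrank F y.1 = D + 1 ∨ finrank F y.1 = D - 1 := y.2.imp And.left And.left

lemma tg_adj_of (w z : TGVertex F D H)
    (h : finrank F w.1 + finrank F z.1 = 2 * finrank F ↥(w.1 ⊓ z.1) + 2) :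
    (twistedGrassmann F D H).Adj w z := h

set_option maxHeartbeats 1600000 in
lemma tg_step (hD : 2 ≤ D) (hH : finrank F H = 2 * D) (y z : TGVertex F D H) (hne : y ≠ z) :
    ∃ w : TGVertex F D H, (twistedGrassmann F D H).Adj w z ∧
      finrank F w.1 + 2 * finrank F ↥(y.1 ⊓ z.1) + 2 ≤
        2 * finrank F ↥(y.1 ⊓ w.1) + finrank F z.1 := by
  classical
  have hV : finrank F (Fin (2 * D + 1) → F) = 2 * D + 1 := Module.finrank_fin_fun F
  have hne' : y.1 ≠ z.1 := fun h => hne (Subtype.ext h)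
  by_cases hadj : finrank F y.1 + finrank F z.1 = 2 * finrank F ↥(y.1 ⊓ z.1) + 2
  · refine ⟨y, tg_adj_of y z hadj, ?_⟩
    rw [inf_idem]
    omega
  · have hlb : 2 * finrank F ↥(y.1 ⊓ z.1) + 1 ≤ finrank F y.1 + finrank F z.1 := by
      by_contra h
      push_neg at h
      exact hne' (tg_eq_of_inf _ _ (by omega))
    rcases z.2 with ⟨hz1, hz2⟩ | ⟨hz1, hz2⟩
    · -- z has dimension D+1, not contained in H
      rcases y.2 with ⟨hy1, hy2⟩ | ⟨hy1, hy2⟩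
      · -- Case AA
        have hk4 : finrank F ↥(y.1 ⊓ z.1) + 1 ≤ D := by omega
        have hYZ : ¬y.1 ≤ z.1 := fun h => hne' (Submodule.eq_of_le_of_finrank_le h (by omega))
        obtain ⟨u, huY, huZ, huH⟩ := tg_avoid_two hYZ hy2
        obtain ⟨z', hIz', hz'Z, hz'⟩ :=
          tg_exists_between (inf_le_right : y.1 ⊓ z.1 ≤ z.1) D (by omega) (by omega)
        have huz' : u ∉ z' := fun h => huZ (hz'Z h)
        obtain ⟨w, hwdef⟩ : ∃ w : Submodule F (Fin (2 * D + 1) → F), w = z' ⊔ (F ∙ u) := ⟨_, rfl⟩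
        have hz'w : z' ≤ w := by rw [hwdef]; exact le_sup_left
        have huw : u ∈ w := by rw [hwdef]; exact mem_sup_right (mem_span_singleton_self u)
        have hwrank : finrank F w = D + 1 := by rw [hwdef, tg_finrank_sup_span huz', hz']
        have hwH : ¬w ≤ H := fun h => huH (h huw)
        have hwZrank : finrank F ↥(w ⊓ z.1) = D := by
          have hq := tg_inf_rank hz'w hz'Z huw huZ (by omega) (by omega)
          omega
        refine ⟨⟨w, Or.inl ⟨hwrank, hwH⟩⟩, tg_adj_of _ z
          (show finrank F w + finrank F z.1 = 2 * finrank F ↥(w ⊓ z.1) + 2 by omega), ?_⟩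
        show finrank F w + 2 * finrank F ↥(y.1 ⊓ z.1) + 2 ≤
          2 * finrank F ↥(y.1 ⊓ w) + finrank F z.1
        have hIYw : (y.1 ⊓ z.1) ⊔ (F ∙ u) ≤ y.1 ⊓ w :=
          le_inf (sup_le inf_le_left ((span_singleton_le_iff_mem u y.1).mpr huY))
            (sup_le (hIz'.trans hz'w) ((span_singleton_le_iff_mem u w).mpr huw))
        have hfr : finrank F ↥((y.1 ⊓ z.1) ⊔ (F ∙ u)) = finrank F ↥(y.1 ⊓ z.1) + 1 :=
          tg_finrank_sup_span (fun h => huZ h.2)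
        have hge : finrank F ↥((y.1 ⊓ z.1) ⊔ (F ∙ u)) ≤ finrank F ↥(y.1 ⊓ w) :=
          Submodule.finrank_mono hIYw
        omega
      · -- Case AB: y small, z big
        have hk4 : finrank F ↥(y.1 ⊓ z.1) + 2 ≤ D := by omega
        have hYZ : ¬y.1 ≤ z.1 := fun h => by
          have : finrank F y.1 ≤ finrank F ↥(y.1 ⊓ z.1) :=
            Submodule.finrank_mono (le_inf le_rfl h)
          omega
        obtain ⟨u, huY, huZ⟩ := SetLike.not_le_iff_exists.mp hYZ
        obtain ⟨v, hvZ, hvH⟩ := SetLike.not_le_iff_exists.mp hz2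
        have hZH : finrank F ↥(z.1 ⊓ H) = D := by
          have h1 := Submodule.finrank_sup_add_finrank_inf_eq z.1 H
          have h2 : finrank F ↥(z.1 ⊔ H) ≤ 2 * D + 1 := le_trans (Submodule.finrank_le _) (le_of_eq hV)
          have h3 : H < z.1 ⊔ H := lt_of_le_of_ne le_sup_right
            (fun h => hz2 (le_sup_left.trans h.ge))
          have h4 : finrank F H < finrank F ↥(z.1 ⊔ H) := Submodule.finrank_lt_finrank_of_lt h3
          omega
        have hIZH : y.1 ⊓ z.1 ≤ z.1 ⊓ H := le_inf inf_le_right (inf_le_left.trans hy2)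
        obtain ⟨z'', hIz'', hz''ZH, hz''⟩ := tg_exists_between hIZH (D - 1) (by omega) (by omega)
        have hvz'' : v ∉ z'' := fun h => hvH (hz''ZH h).2
        obtain ⟨z', hz'def⟩ : ∃ z' : Submodule F (Fin (2 * D + 1) → F), z' = z'' ⊔ (F ∙ v) :=
          ⟨_, rfl⟩
        have hz''z' : z'' ≤ z' := by rw [hz'def]; exact le_sup_left
        have hvz' : v ∈ z' := by rw [hz'def]; exact mem_sup_right (mem_span_singleton_self v)
        have hz' : finrank F z' = D := by
          rw [hz'def, tg_finrank_sup_span hvz'', hz'']; omega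
        have hz'Z : z' ≤ z.1 := by
          rw [hz'def]
          exact sup_le (hz''ZH.trans inf_le_left) ((span_singleton_le_iff_mem v z.1).mpr hvZ)
        have huz' : u ∉ z' := fun h => huZ (hz'Z h)
        obtain ⟨w, hwdef⟩ : ∃ w : Submodule F (Fin (2 * D + 1) → F), w = z' ⊔ (F ∙ u) := ⟨_, rfl⟩
        have hz'w : z' ≤ w := by rw [hwdef]; exact le_sup_left
        have huw : u ∈ w := by rw [hwdef]; exact mem_sup_right (mem_span_singleton_self u)
        have hwrank : finrank F w = D + 1 := by rw [hwdef, tg_finrank_sup_span huz', hz']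
        have hvw : v ∈ w := hz'w hvz'
        have hwH : ¬w ≤ H := fun h => hvH (h hvw)
        have hwZrank : finrank F ↥(w ⊓ z.1) = D := by
          have hq := tg_inf_rank hz'w hz'Z huw huZ (by omega) (by omega)
          omega
        refine ⟨⟨w, Or.inl ⟨hwrank, hwH⟩⟩, tg_adj_of _ z
          (show finrank F w + finrank F z.1 = 2 * finrank F ↥(w ⊓ z.1) + 2 by omega), ?_⟩
        show finrank F w + 2 * finrank F ↥(y.1 ⊓ z.1) + 2 ≤
          2 * finrank F ↥(y.1 ⊓ w) + finrank F z.1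
        have hIYw : (y.1 ⊓ z.1) ⊔ (F ∙ u) ≤ y.1 ⊓ w :=
          le_inf (sup_le inf_le_left ((span_singleton_le_iff_mem u y.1).mpr huY))
            (sup_le ((hIz''.trans hz''z').trans hz'w) ((span_singleton_le_iff_mem u w).mpr huw))
        have hfr : finrank F ↥((y.1 ⊓ z.1) ⊔ (F ∙ u)) = finrank F ↥(y.1 ⊓ z.1) + 1 :=
          tg_finrank_sup_span (fun h => huZ h.2)
        have hge : finrank F ↥((y.1 ⊓ z.1) ⊔ (F ∙ u)) ≤ finrank F ↥(y.1 ⊓ w) :=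
          Submodule.finrank_mono hIYw
        omega
    · -- z has dimension D-1, contained in H
      rcases y.2 with ⟨hy1, hy2⟩ | ⟨hy1, hy2⟩
      · -- Case BA: y big, z small
        have hk4 : finrank F ↥(y.1 ⊓ z.1) + 2 ≤ D := by omega
        obtain ⟨u, huY, huH⟩ := SetLike.not_le_iff_exists.mp hy2
        have huZ : u ∉ z.1 := fun h => huH (hz2 h)
        obtain ⟨Zu, hZudef⟩ : ∃ Zu : Submodule F (Fin (2 * D + 1) → F), Zu = z.1 ⊔ (F ∙ u) :=
          ⟨_, rfl⟩
        have hZZu : z.1 ≤ Zu := by rw [hZudef]; exact le_sup_left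
        have huZu : u ∈ Zu := by rw [hZudef]; exact mem_sup_right (mem_span_singleton_self u)
        have hZu : finrank F Zu = D := by
          rw [hZudef, tg_finrank_sup_span huZ, hz1]; omega
        have hYZu : ¬y.1 ≤ Zu := fun h => by
          have := Submodule.finrank_mono h
          omega
        obtain ⟨v, hvY, hvZu⟩ := SetLike.not_le_iff_exists.mp hYZu
        obtain ⟨w, hwdef⟩ : ∃ w : Submodule F (Fin (2 * D + 1) → F), w = Zu ⊔ (F ∙ v) := ⟨_, rfl⟩
        have hZuw : Zu ≤ w := by rw [hwdef]; exact le_sup_left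
        have hvw : v ∈ w := by rw [hwdef]; exact mem_sup_right (mem_span_singleton_self v)
        have hwrank : finrank F w = D + 1 := by rw [hwdef, tg_finrank_sup_span hvZu, hZu]
        have huw : u ∈ w := hZuw huZu
        have hwH : ¬w ≤ H := fun h => huH (h huw)
        have hZw : z.1 ≤ w := hZZu.trans hZuw
        have hwZrank : finrank F ↥(w ⊓ z.1) = D - 1 := by rw [inf_eq_right.mpr hZw]; exact hz1
        refine ⟨⟨w, Or.inl ⟨hwrank, hwH⟩⟩, tg_adj_of _ z
          (show finrank F w + finrank F z.1 = 2 * finrank F ↥(w ⊓ z.1) + 2 by omega), ?_⟩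
        show finrank F w + 2 * finrank F ↥(y.1 ⊓ z.1) + 2 ≤
          2 * finrank F ↥(y.1 ⊓ w) + finrank F z.1
        have hfr1 : finrank F ↥((y.1 ⊓ z.1) ⊔ (F ∙ u)) = finrank F ↥(y.1 ⊓ z.1) + 1 :=
          tg_finrank_sup_span (fun h => huZ h.2)
        have hvnot : v ∉ (y.1 ⊓ z.1) ⊔ (F ∙ u) := fun h => by
          refine hvZu ?_
          rw [hZudef]
          exact (sup_le_sup_right inf_le_right ((F ∙ u))) h
        have hfr2 : finrank F ↥(((y.1 ⊓ z.1) ⊔ (F ∙ u)) ⊔ (F ∙ v)) = finrank F ↥(y.1 ⊓ z.1) + 2 := by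
          rw [tg_finrank_sup_span hvnot, hfr1]
        have hIYw : ((y.1 ⊓ z.1) ⊔ (F ∙ u)) ⊔ (F ∙ v) ≤ y.1 ⊓ w :=
          le_inf
            (sup_le (sup_le inf_le_left ((span_singleton_le_iff_mem u y.1).mpr huY))
              ((span_singleton_le_iff_mem v y.1).mpr hvY))
            (sup_le (sup_le (inf_le_right.trans hZw) ((span_singleton_le_iff_mem u w).mpr huw))
              ((span_singleton_le_iff_mem v w).mpr hvw))
        have hge : finrank F ↥(((y.1 ⊓ z.1) ⊔ (F ∙ u)) ⊔ (F ∙ v)) ≤ finrank F ↥(y.1 ⊓ w) :=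
          Submodule.finrank_mono hIYw
        omega
      · -- Case BB
        have hk4 : finrank F ↥(y.1 ⊓ z.1) + 3 ≤ D := by omega
        have hYZ : ¬y.1 ≤ z.1 := fun h => by
          have : finrank F y.1 ≤ finrank F ↥(y.1 ⊓ z.1) :=
            Submodule.finrank_mono (le_inf le_rfl h)
          omega
        obtain ⟨u, huY, huZ⟩ := SetLike.not_le_iff_exists.mp hYZ
        obtain ⟨z', hIz', hz'Z, hz'⟩ :=
          tg_exists_between (inf_le_right : y.1 ⊓ z.1 ≤ z.1) (D - 2) (by omega) (by omega)
        have huz' : u ∉ z' := fun h => huZ (hz'Z h)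
        obtain ⟨w, hwdef⟩ : ∃ w : Submodule F (Fin (2 * D + 1) → F), w = z' ⊔ (F ∙ u) := ⟨_, rfl⟩
        have hz'w : z' ≤ w := by rw [hwdef]; exact le_sup_left
        have huw : u ∈ w := by rw [hwdef]; exact mem_sup_right (mem_span_singleton_self u)
        have hwrank : finrank F w = D - 1 := by
          rw [hwdef, tg_finrank_sup_span huz', hz']; omega
        have hwH : w ≤ H := by
          rw [hwdef]
          exact sup_le (hz'Z.trans hz2) ((span_singleton_le_iff_mem u H).mpr (hy2 huY))
        have hwZrank : finrank F ↥(w ⊓ z.1) = D - 2 := by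
          have hq := tg_inf_rank hz'w hz'Z huw huZ (by omega) (by omega)
          omega
        refine ⟨⟨w, Or.inr ⟨hwrank, hwH⟩⟩, tg_adj_of _ z
          (show finrank F w + finrank F z.1 = 2 * finrank F ↥(w ⊓ z.1) + 2 by omega), ?_⟩
        show finrank F w + 2 * finrank F ↥(y.1 ⊓ z.1) + 2 ≤
          2 * finrank F ↥(y.1 ⊓ w) + finrank F z.1
        have hIYw : (y.1 ⊓ z.1) ⊔ (F ∙ u) ≤ y.1 ⊓ w :=
          le_inf (sup_le inf_le_left ((span_singleton_le_iff_mem u y.1).mpr huY))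
            (sup_le (hIz'.trans hz'w) ((span_singleton_le_iff_mem u w).mpr huw))
        have hfr : finrank F ↥((y.1 ⊓ z.1) ⊔ (F ∙ u)) = finrank F ↥(y.1 ⊓ z.1) + 1 :=
          tg_finrank_sup_span (fun h => huZ h.2)
        have hge : finrank F ↥((y.1 ⊓ z.1) ⊔ (F ∙ u)) ≤ finrank F ↥(y.1 ⊓ w) :=
          Submodule.finrank_mono hIYw
        omega

lemma tg_walk_bound {y z : TGVertex F D H} (p : (twistedGrassmann F D H).Walk y z) :
    finrank F y.1 + finrank F z.1 ≤ 2 * finrank F ↥(y.1 ⊓ z.1) + 2 * p.length := by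
  induction p with
  | nil =>
    rw [inf_idem]
    omega
  | @cons a b c h p ih =>
    have hadj : finrank F a.1 + finrank F b.1 = 2 * finrank F ↥(a.1 ⊓ b.1) + 2 := h
    have htri := tg_triangle a.1 b.1 c.1
    rw [SimpleGraph.Walk.length_cons]
    omega

lemma tg_exists_walk (hD : 2 ≤ D) (hH : finrank F H = 2 * D) :
    ∀ n (y z : TGVertex F D H),
      finrank F y.1 + finrank F z.1 ≤ 2 * finrank F ↥(y.1 ⊓ z.1) + n →
      ∃ p : (twistedGrassmann F D H).Walk y z, 2 * p.length ≤ n := by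
  intro n
  induction n using Nat.strong_induction_on with
  | _ n ih =>
    intro y z hn
    by_cases hyz : y = z
    · subst hyz
      exact ⟨SimpleGraph.Walk.nil, by simp⟩
    · have hne' : y.1 ≠ z.1 := fun h => hyz (Subtype.ext h)
      have hlb : 2 * finrank F ↥(y.1 ⊓ z.1) + 1 ≤ finrank F y.1 + finrank F z.1 := by
        by_contra h
        push_neg at h
        exact hne' (tg_eq_of_inf _ _ (by omega))
      have hn2 : 2 ≤ n := by
        rcases tg_dim_cases y with hy | hy <;> rcases tg_dim_cases z with hz | hz <;> omega
      obtain ⟨w, hadjwz, hineq⟩ := tg_step hD hH y z hyz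
      have hadj : finrank F w.1 + finrank F z.1 = 2 * finrank F ↥(w.1 ⊓ z.1) + 2 := hadjwz
      obtain ⟨p, hp⟩ := ih (n - 2) (by omega) y w (by omega)
      exact ⟨p.concat hadjwz, by rw [SimpleGraph.Walk.length_concat]; omega⟩

lemma tg_dist (hD : 2 ≤ D) (hH : finrank F H = 2 * D) (y z : TGVertex F D H) :
    2 * (twistedGrassmann F D H).dist y z + 2 * finrank F ↥(y.1 ⊓ z.1) =
      finrank F y.1 + finrank F z.1 := by
  have hle1 := tg_inf_le_left' y.1 z.1
  have hle2 := tg_inf_le_right' y.1 z.1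
  obtain ⟨p, hp⟩ := tg_exists_walk hD hH
    (finrank F y.1 + finrank F z.1 - 2 * finrank F ↥(y.1 ⊓ z.1)) y z (by omega)
  have hreach : (twistedGrassmann F D H).Reachable y z := ⟨p⟩
  obtain ⟨q, hq⟩ := hreach.exists_walk_length_eq_dist
  have hlow := tg_walk_bound q
  have hup := SimpleGraph.dist_le p
  rw [hq] at hlow
  omega

lemma tg_reachable (hD : 2 ≤ D) (hH : finrank F H = 2 * D) (y z : TGVertex F D H) :
    (twistedGrassmann F D H).Reachable y z := by
  obtain ⟨p, -⟩ := tg_exists_walk hD hH (finrank F y.1 + finrank F z.1) y z (by omega)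
  exact ⟨p⟩

end Main

/-- in `J̃_q(2D+1,D)`, the graph distance between `y` and `z`
equals `i` (for `0 ≤ i ≤ D`) iff `dim y + dim z - 2 dim(y ∩ z) = 2i`; in
particular the graph is connected and has diameter `D`. -/
theorem twistedGrassmann_dist (F : Type) [Field F] [Fintype F] (D : ℕ) (hD : 2 ≤ D)
    (H : Submodule F (Fin (2 * D + 1) → F)) (hH : finrank F H = 2 * D) :
    (∀ y z : TGVertex F D H, ∀ i : ℕ, i ≤ D →
        ((twistedGrassmann F D H).dist y z = i ↔
          finrank F y.1 + finrank F z.1 = 2 * finrank F ↥(y.1 ⊓ z.1) + 2 * i))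
      ∧ (twistedGrassmann F D H).Connected
      ∧ (∀ y z : TGVertex F D H, (twistedGrassmann F D H).dist y z ≤ D)
      ∧ (∃ y z : TGVertex F D H, (twistedGrassmann F D H).dist y z = D) := by
  have hV : finrank F (Fin (2 * D + 1) → F) = 2 * D + 1 := Module.finrank_fin_fun F
  -- construction of an extremal pair
  obtain ⟨Z0, -, hZ0H, hZ0⟩ := tg_exists_between (bot_le : ⊥ ≤ H) (D - 1)
    (by rw [finrank_bot]; omega) (by omega)
  obtain ⟨C, hC⟩ := Submodule.exists_isCompl Z0
  have hCrank : finrank F Z0 + finrank F C = 2 * D + 1 := by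
    have h := Submodule.finrank_add_eq_of_isCompl hC
    omega
  have hCH : ¬C ≤ H := by
    intro h
    have htop : (⊤ : Submodule F (Fin (2 * D + 1) → F)) ≤ H := by
      rw [← hC.sup_eq_top]
      exact sup_le hZ0H h
    have := Submodule.finrank_mono htop
    rw [finrank_top] at this
    omega
  obtain ⟨v, hvC, hvH⟩ := SetLike.not_le_iff_exists.mp hCH
  have hv0 : v ≠ 0 := fun h => hvH (h ▸ H.zero_mem)
  have hvspan : (F ∙ v) ≤ C := (Submodule.span_singleton_le_iff_mem v C).mpr hvC
  obtain ⟨Y0, hvY0, hY0C, hY0⟩ := tg_exists_between hvspan (D + 1)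
    (by rw [finrank_span_singleton hv0]; omega) (by omega)
  have hY0H : ¬Y0 ≤ H := fun h => hvH (h (hvY0 (Submodule.mem_span_singleton_self v)))
  have hinf : Y0 ⊓ Z0 = ⊥ := by
    rw [eq_bot_iff]
    refine le_trans (le_inf (inf_le_right : Y0 ⊓ Z0 ≤ Z0) (inf_le_left.trans hY0C)) ?_
    rw [hC.inf_eq_bot]
  set y0 : TGVertex F D H := ⟨Y0, Or.inl ⟨hY0, hY0H⟩⟩ with hy0def
  set z0 : TGVertex F D H := ⟨Z0, Or.inr ⟨hZ0, hZ0H⟩⟩ with hz0def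
  haveI : Nonempty (TGVertex F D H) := ⟨y0⟩
  refine ⟨?_, ?_, ?_, ⟨y0, z0, ?_⟩⟩
  · intro y z i hi
    have hkey := tg_dist hD hH y z
    omega
  · exact ⟨fun y z => tg_reachable hD hH y z⟩
  · intro y z
    have hkey := tg_dist hD hH y z
    have hsup := Submodule.finrank_sup_add_finrank_inf_eq y.1 z.1
    have hsb : finrank F ↥(y.1 ⊔ z.1) ≤ 2 * D + 1 :=
      le_trans (Submodule.finrank_le _) (le_of_eq hV)
    rcases tg_dim_cases y with hy | hy <;> rcases tg_dim_cases z with hz | hz <;> omega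
  · have hkey := tg_dist hD hH y0 z0
    have h1 : finrank F y0.1 = D + 1 := hY0
    have h2 : finrank F z0.1 = D - 1 := hZ0
    have h3 : finrank F ↥(y0.1 ⊓ z0.1) = 0 := by
      show finrank F ↥(Y0 ⊓ Z0) = 0
      rw [hinf, finrank_bot]
    omega
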